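/- Let G be a finite simple graph and let S ⊆ H ⊆ G be subgraphs. Then q(G,S) ≤ q(H,S) + q(G,H), where q(G,S) = Σ_{u ∈ V(S)} deg_{G−E(S)}(u), q(H,S) = Σ_{u ∈ V(S)} deg_{H−E(S)}(u), and q(G,H) = Σ_{u ∈ V(H)} deg_{G−E(H)}(u). -/

import Mathlib

/-- Number of vertices of the subgraph `K` not in the subgraph `S`. -/
noncomputable def vCount {V : Type*} {G : SimpleGraph V} (K S : G.Subgraph) : ℕ :=
  (K.verts \ S.verts).ncard

/-- Number of edges of the subgraph `K` not in the subgraph `S`. -/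
noncomputable def eCount {V : Type*} {G : SimpleGraph V} (K S : G.Subgraph) : ℕ :=
  (K.edgeSet \ S.edgeSet).ncard

/-- Number of connected components of the subgraph `K`. -/
noncomputable def nComp {V : Type*} {G : SimpleGraph V} (K : G.Subgraph) : ℕ :=
  Nat.card K.coe.ConnectedComponent

/-- Degree of the vertex `u` in the graph obtained from `K` by deleting the edges of `S`. -/
noncomputable def degDel {V : Type*} {G : SimpleGraph V} (K S : G.Subgraph) (u : V) : ℕ :=
  (K.neighborSet u \ S.neighborSet u).ncard

/-- `q(K,S)`: the sum over vertices `u` of `S` of the degree of `u` in `K − E(S)`. -/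
noncomputable def qCount {V : Type*} {G : SimpleGraph V} (K S : G.Subgraph) : ℕ :=
  ∑ᶠ u ∈ S.verts, degDel K S u

/-- The deficiency `def(K,S) = 3·e(K,S) − 5·v(K,S) + 10·(c(S) − c(K))`. -/
noncomputable def defic {V : Type*} {G : SimpleGraph V} (K S : G.Subgraph) : ℝ :=
  3 * (eCount K S : ℝ) - 5 * (vCount K S : ℝ) + 10 * ((nComp S : ℝ) - (nComp K : ℝ))

/-- for subgraphs `S ⊆ H ⊆ G`, `q(G,S) ≤ q(H,S) + q(G,H)`. -/
theorem statement_6 {V : Type*} [Fintype V] (G : SimpleGraph V) (S H : G.Subgraph)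
    (hSH : S ≤ H) :
    qCount (⊤ : G.Subgraph) S ≤ qCount H S + qCount (⊤ : G.Subgraph) H :=
  by
  classical
  have key : ∀ u, degDel ⊤ S u ≤ degDel H S u + degDel ⊤ H u := by
    intro u
    have hsub : (⊤ : G.Subgraph).neighborSet u \ S.neighborSet u ⊆
        (H.neighborSet u \ S.neighborSet u) ∪
          ((⊤ : G.Subgraph).neighborSet u \ H.neighborSet u) := by
      intro x hx
      by_cases hxH : x ∈ H.neighborSet u
      · exact Or.inl ⟨hxH, hx.2⟩
      · exact Or.inr ⟨hx.1, hxH⟩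
    calc degDel ⊤ S u ≤ ((H.neighborSet u \ S.neighborSet u) ∪
          ((⊤ : G.Subgraph).neighborSet u \ H.neighborSet u)).ncard :=
        Set.ncard_le_ncard hsub (Set.toFinite _)
      _ ≤ _ := Set.ncard_union_le _ _
  have hS : S.verts.Finite := Set.toFinite _
  have hH : H.verts.Finite := Set.toFinite _
  unfold qCount
  rw [← hS.coe_toFinset, ← hH.coe_toFinset]
  rw [finsum_mem_coe_finset, finsum_mem_coe_finset, finsum_mem_coe_finset]
  calc ∑ u ∈ hS.toFinset, degDel ⊤ S u
      ≤ ∑ u ∈ hS.toFinset, (degDel H S u + degDel ⊤ H u) :=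
        Finset.sum_le_sum fun u _ => key u
    _ = ∑ u ∈ hS.toFinset, degDel H S u + ∑ u ∈ hS.toFinset, degDel ⊤ H u :=
        Finset.sum_add_distrib
    _ ≤ ∑ u ∈ hS.toFinset, degDel H S u + ∑ u ∈ hH.toFinset, degDel ⊤ H u := by
        gcongr
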